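/- arXiv:2002.11642 — 3 statements merged into one kernel-verified Lean document; each statement's English description precedes it below -/
import Mathlib

section
/- With f(a,x)=E[Y|A=a,X=x] and v(z)=E_{π_e(a|z)}[f(a,z)], the doubly robust identity holds: for any bounded measurable functions f† and (r†,w†), E_{hist}[r†(X)w†(A,X)(Y − f†(A,X))] + E_{Z∼q}[v†(Z)] = R(π_e), provided either (i) r†(x)w†(a,x) = r(x)w(a,x) for all (a,x), or (ii) f†(a,x) = f(a,x) for all (a,x), where v†(z)=E_{π_e(a|z)}[f†(a,z)]. -/
open MeasureTheory

/-- Doubly robust identity: with `f(a,x) = E[Y|A=a,X=x]` and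
`v†(z) = Σ_a π_e(a|z) f†(a,z)`, we have
`E_hist[r† w† (Y − f†)] + E_{Z∼q}[v†(Z)] = R(π_e)` provided either
`r† w† = r w` or `f† = f`. -/
theorem doubly_robust_identity
    {𝒳 : Type*} [MeasurableSpace 𝒳] {A : Type*} [Fintype A]
    (μ : Measure 𝒳) (ν : Measure ℝ)
    (p q : 𝒳 → ℝ) (πb πe : A → 𝒳 → ℝ) (pden : A → 𝒳 → ℝ → ℝ)
    (hp : ∀ x, 0 < p x) (hq : ∀ x, 0 ≤ q x)
    (hπb : ∀ a x, 0 < πb a x) (hπe : ∀ a x, 0 ≤ πe a x)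
    (hpden : ∀ a x, (∀ y, 0 ≤ pden a x y) ∧ (∫ y, pden a x y ∂ν) = 1)
    (r : 𝒳 → ℝ) (hr : ∀ x, r x = q x / p x)
    (w : A → 𝒳 → ℝ) (hw : ∀ a x, w a x = πe a x / πb a x)
    (f : A → 𝒳 → ℝ) (hf : ∀ a x, f a x = ∫ y, y * pden a x y ∂ν)
    (fd : A → 𝒳 → ℝ) (rd : 𝒳 → ℝ) (wd : A → 𝒳 → ℝ)
    (hYint : ∀ a x, Integrable (fun y => y * pden a x y) ν)
    (hYint' : ∀ a x, Integrable (fun y => pden a x y) ν)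
    (hint1 : Integrable
      (fun x => ∑ a, ∫ y, rd x * wd a x * (y - fd a x) * (p x * πb a x * pden a x y) ∂ν) μ)
    (hint2 : Integrable (fun x => ∑ a, πe a x * fd a x * q x) μ)
    (hint3 : Integrable (fun x => ∑ a, πe a x * f a x * q x) μ)
    (hcase : (∀ a x, rd x * wd a x = r x * w a x) ∨ (∀ a x, fd a x = f a x)) :
    (∫ x, ∑ a, ∫ y, rd x * wd a x * (y - fd a x) * (p x * πb a x * pden a x y) ∂ν ∂μ)
      + (∫ x, ∑ a, πe a x * fd a x * q x ∂μ)
      = ∫ x, ∑ a, πe a x * f a x * q x ∂μ := by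
  have inner : ∀ a x,
      (∫ y, rd x * wd a x * (y - fd a x) * (p x * πb a x * pden a x y) ∂ν)
        = (rd x * wd a x * p x * πb a x) * (f a x - fd a x) := by
    intro a x
    have heq : (fun y => rd x * wd a x * (y - fd a x) * (p x * πb a x * pden a x y))
        = fun y => (rd x * wd a x * p x * πb a x) * (y * pden a x y)
            - (rd x * wd a x * p x * πb a x * fd a x) * pden a x y := by
      funext y; ring
    rw [heq, integral_sub ((hYint a x).const_mul _) ((hYint' a x).const_mul _),
      integral_const_mul, integral_const_mul, (hpden a x).2, hf]
    ring
  have key : ∀ x,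
      (∑ a, ∫ y, rd x * wd a x * (y - fd a x) * (p x * πb a x * pden a x y) ∂ν)
        + (∑ a, πe a x * fd a x * q x) = ∑ a, πe a x * f a x * q x := by
    intro x
    rw [← Finset.sum_add_distrib]
    refine Finset.sum_congr rfl fun a _ => ?_
    rw [inner a x]
    rcases hcase with h | h
    · have hc : rd x * wd a x * p x * πb a x = πe a x * q x := by
        have h1 : p x ≠ 0 := (hp x).ne'
        have h2 : πb a x ≠ 0 := (hπb a x).ne'
        rw [h a x, hr, hw]
        field_simp
      rw [hc]; ring
    · rw [h a x]; ring
  rw [← integral_add hint1 hint2]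
  exact integral_congr_ae (Filter.Eventually.of_forall key)
end

section
/- The doubly robust bias bound: for bounded estimators r̂, ŵ, f̂ (independent of the data fold) of r, w, f, the absolute bias satisfies |E[r̂(X)ŵ(A,X)(Y − f̂(A,X))] + E_{Z∼q}[v̂(Z)] − R(π_e)| ≤ ‖r̂(X)ŵ(A,X) − r(X)w(A,X)‖₂ · ‖f̂(A,X) − f(A,X)‖₂, where v̂(z)=E_{π_e(a|z)}[f̂(a,z)]. -/
open MeasureTheory

/-- Doubly robust bias bound: for bounded (data-independent)
estimators `rh, wh, fh` of `r, w, f`,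
`|E[rh·wh·(Y − fh)] + E_{Z∼q}[vh(Z)] − R(π_e)|
   ≤ ‖rh·wh − r·w‖₂ · ‖fh − f‖₂`,
where `vh(z) = Σ_a π_e(a|z) fh(a,z)` and `‖·‖₂` is the L² norm under the
historical distribution `p(x) π_b(a|x) p(y|a,x)`. -/
theorem doubly_robust_bias_bound
    {𝒳 : Type*} [MeasurableSpace 𝒳] {A : Type*} [Fintype A]
    (μ : Measure 𝒳) (ν : Measure ℝ)
    (p q : 𝒳 → ℝ) (πb πe : A → 𝒳 → ℝ) (pden : A → 𝒳 → ℝ → ℝ)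
    (hp : ∀ x, 0 < p x) (hq : ∀ x, 0 ≤ q x)
    (hπb : ∀ a x, 0 < πb a x) (hπe : ∀ a x, 0 ≤ πe a x)
    (hpden : ∀ a x, (∀ y, 0 ≤ pden a x y) ∧ (∫ y, pden a x y ∂ν) = 1)
    (r : 𝒳 → ℝ) (hr : ∀ x, r x = q x / p x)
    (w : A → 𝒳 → ℝ) (hw : ∀ a x, w a x = πe a x / πb a x)
    (f : A → 𝒳 → ℝ) (hf : ∀ a x, f a x = ∫ y, y * pden a x y ∂ν)
    (rh : 𝒳 → ℝ) (wh fh : A → 𝒳 → ℝ)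
    (C : ℝ) (hbdd : ∀ a x, |rh x| ≤ C ∧ |wh a x| ≤ C ∧ |fh a x| ≤ C ∧ |f a x| ≤ C)
    (hYint : ∀ a x, Integrable (fun y => y * pden a x y) ν)
    (hYint' : ∀ a x, Integrable (fun y => pden a x y) ν)
    (hint1 : Integrable
      (fun x => ∑ a, ∫ y, rh x * wh a x * (y - fh a x) * (p x * πb a x * pden a x y) ∂ν) μ)
    (hint2 : Integrable (fun x => ∑ a, πe a x * fh a x * q x) μ)
    (hint3 : Integrable (fun x => ∑ a, πe a x * f a x * q x) μ)
    (hint4 : Integrable (fun x => ∑ a, (rh x * wh a x - r x * w a x)^2 * (p x * πb a x)) μ)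
    (hint5 : Integrable (fun x => ∑ a, (fh a x - f a x)^2 * (p x * πb a x)) μ)
    (hint6 : Integrable
      (fun x => ∑ a, |rh x * wh a x - r x * w a x| * |fh a x - f a x| * (p x * πb a x)) μ) :
    |(∫ x, ∑ a, ∫ y, rh x * wh a x * (y - fh a x) * (p x * πb a x * pden a x y) ∂ν ∂μ)
        + (∫ x, ∑ a, πe a x * fh a x * q x ∂μ)
        - ∫ x, ∑ a, πe a x * f a x * q x ∂μ|
      ≤ Real.sqrt (∫ x, ∑ a, (rh x * wh a x - r x * w a x)^2 * (p x * πb a x) ∂μ)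
        * Real.sqrt (∫ x, ∑ a, (fh a x - f a x)^2 * (p x * πb a x) ∂μ) := by
  have hpπb : ∀ a x, 0 ≤ p x * πb a x := fun a x => le_of_lt (mul_pos (hp x) (hπb a x))
  -- Step 1: inner integral collapses
  have hinner : ∀ a x, (∫ y, rh x * wh a x * (y - fh a x) * (p x * πb a x * pden a x y) ∂ν)
      = rh x * wh a x * (p x * πb a x) * (f a x - fh a x) := by
    intro a x
    have h1 : (fun y => rh x * wh a x * (y - fh a x) * (p x * πb a x * pden a x y))
        = fun y => (rh x * wh a x * (p x * πb a x)) * (y * pden a x y)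
            - (rh x * wh a x * (p x * πb a x) * fh a x) * pden a x y := by
      funext y; ring
    rw [h1, integral_sub ((hYint a x).const_mul _) ((hYint' a x).const_mul _),
      integral_const_mul, integral_const_mul, (hpden a x).2, ← hf]
    ring
  have hrw : ∀ a x, r x * w a x * (p x * πb a x) = πe a x * q x := by
    intro a x
    rw [hr, hw]
    field_simp [(hp x).ne', (hπb a x).ne']
  -- Pointwise combination
  have hgeq : ∀ x, (∑ a, ∫ y, rh x * wh a x * (y - fh a x) * (p x * πb a x * pden a x y) ∂ν)
        + (∑ a, πe a x * fh a x * q x) - (∑ a, πe a x * f a x * q x)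
      = ∑ a, -((rh x * wh a x - r x * w a x) * (fh a x - f a x) * (p x * πb a x)) := by
    intro x
    rw [← Finset.sum_add_distrib, ← Finset.sum_sub_distrib]
    refine Finset.sum_congr rfl fun a _ => ?_
    rw [hinner a x]
    linear_combination (f a x - fh a x) * hrw a x
  have i12 : Integrable (fun x =>
      (∑ a, ∫ y, rh x * wh a x * (y - fh a x) * (p x * πb a x * pden a x y) ∂ν)
        + ∑ a, πe a x * fh a x * q x) μ := hint1.add hint2
  -- Step 2: combined bias as a single integral
  have hkey : (∫ x, ∑ a, ∫ y, rh x * wh a x * (y - fh a x) * (p x * πb a x * pden a x y) ∂ν ∂μ)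
        + (∫ x, ∑ a, πe a x * fh a x * q x ∂μ)
        - ∫ x, ∑ a, πe a x * f a x * q x ∂μ
      = ∫ x, ∑ a,
          -((rh x * wh a x - r x * w a x) * (fh a x - f a x) * (p x * πb a x)) ∂μ := by
    rw [← integral_congr_ae (Filter.Eventually.of_forall hgeq),
      integral_sub (i12) hint3, integral_add hint1 hint2]
  have hgInt : Integrable (fun x => ∑ a,
      -((rh x * wh a x - r x * w a x) * (fh a x - f a x) * (p x * πb a x))) μ :=
    ((hint1.add hint2).sub hint3).congr (Filter.Eventually.of_forall fun x => hgeq x)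
  set IA := ∫ x, ∑ a, (rh x * wh a x - r x * w a x)^2 * (p x * πb a x) ∂μ with hIAdef
  set IB := ∫ x, ∑ a, (fh a x - f a x)^2 * (p x * πb a x) ∂μ with hIBdef
  set II := ∫ x, ∑ a,
      |rh x * wh a x - r x * w a x| * |fh a x - f a x| * (p x * πb a x) ∂μ with hIIdef
  have hIA : 0 ≤ IA := integral_nonneg fun x => Finset.sum_nonneg fun a _ =>
    mul_nonneg (sq_nonneg _) (hpπb a x)
  have hIB : 0 ≤ IB := integral_nonneg fun x => Finset.sum_nonneg fun a _ =>
    mul_nonneg (sq_nonneg _) (hpπb a x)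
  have hII : 0 ≤ II := integral_nonneg fun x => Finset.sum_nonneg fun a _ =>
    mul_nonneg (mul_nonneg (abs_nonneg _) (abs_nonneg _)) (hpπb a x)
  -- Step 3: triangle inequality
  have habs : |∫ x, ∑ a,
      -((rh x * wh a x - r x * w a x) * (fh a x - f a x) * (p x * πb a x)) ∂μ| ≤ II := by
    have h0 := norm_integral_le_integral_norm (μ := μ) (f := fun x => ∑ a,
      -((rh x * wh a x - r x * w a x) * (fh a x - f a x) * (p x * πb a x)))
    simp only [Real.norm_eq_abs] at h0
    refine le_trans h0 ?_
    refine integral_mono hgInt.abs hint6 fun x => ?_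
    refine le_trans (Finset.abs_sum_le_sum_abs _ _) ?_
    refine le_of_eq (Finset.sum_congr rfl fun a _ => ?_)
    rw [abs_neg, abs_mul, abs_mul, abs_of_nonneg (hpπb a x)]
  -- Step 4: Cauchy–Schwarz via discriminant
  have hquad : ∀ t : ℝ, 0 ≤ IA * (t * t) + (-(2 * II)) * t + IB := by
    intro t
    have h1 : ∀ x, (∑ a, (t * |rh x * wh a x - r x * w a x| - |fh a x - f a x|)^2
          * (p x * πb a x))
        = ((t * t) * (∑ a, (rh x * wh a x - r x * w a x)^2 * (p x * πb a x))
          - (2 * t) * (∑ a, |rh x * wh a x - r x * w a x| * |fh a x - f a x|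
              * (p x * πb a x)))
          + ∑ a, (fh a x - f a x)^2 * (p x * πb a x) := by
      intro x
      rw [Finset.mul_sum, Finset.mul_sum, ← Finset.sum_sub_distrib,
        ← Finset.sum_add_distrib]
      refine Finset.sum_congr rfl fun a _ => ?_
      have h2 : (t * |rh x * wh a x - r x * w a x| - |fh a x - f a x|)^2
          = (t * t) * (rh x * wh a x - r x * w a x)^2
            - (2 * t) * (|rh x * wh a x - r x * w a x| * |fh a x - f a x|)
            + (fh a x - f a x)^2 := by
        rw [sub_sq, mul_pow, sq_abs, sq_abs]
        ring
      rw [h2]; ring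
    have i4 : Integrable (fun x =>
        (t * t) * ∑ a, (rh x * wh a x - r x * w a x)^2 * (p x * πb a x)) μ :=
      hint4.const_mul _
    have i6 : Integrable (fun x =>
        (2 * t) * ∑ a, |rh x * wh a x - r x * w a x| * |fh a x - f a x|
          * (p x * πb a x)) μ := hint6.const_mul _
    have i46 : Integrable (fun x =>
        (t * t) * (∑ a, (rh x * wh a x - r x * w a x)^2 * (p x * πb a x))
          - (2 * t) * (∑ a, |rh x * wh a x - r x * w a x| * |fh a x - f a x|
              * (p x * πb a x))) μ := i4.sub i6
    have heq : (∫ x, ∑ a, (t * |rh x * wh a x - r x * w a x| - |fh a x - f a x|)^2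
          * (p x * πb a x) ∂μ)
        = IA * (t * t) + (-(2 * II)) * t + IB := by
      rw [integral_congr_ae (Filter.Eventually.of_forall h1),
        integral_add i46 hint5, integral_sub i4 i6,
        integral_const_mul, integral_const_mul, ← hIAdef, ← hIBdef, ← hIIdef]
      ring
    calc (0:ℝ) ≤ ∫ x, ∑ a, (t * |rh x * wh a x - r x * w a x| - |fh a x - f a x|)^2
          * (p x * πb a x) ∂μ :=
        integral_nonneg fun x => Finset.sum_nonneg fun a _ =>
          mul_nonneg (sq_nonneg _) (hpπb a x)
    _ = IA * (t * t) + (-(2 * II)) * t + IB := heq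
  have hdisc := discrim_le_zero hquad
  rw [discrim] at hdisc
  have hII2 : II ^ 2 ≤ IA * IB := by nlinarith [hdisc]
  have hfin : II ≤ Real.sqrt IA * Real.sqrt IB := by
    rw [← Real.sqrt_mul hIA]
    calc II = Real.sqrt (II ^ 2) := by rw [Real.sqrt_sq hII]
    _ ≤ Real.sqrt (IA * IB) := Real.sqrt_le_sqrt hII2
  calc |(∫ x, ∑ a, ∫ y, rh x * wh a x * (y - fh a x) * (p x * πb a x * pden a x y) ∂ν ∂μ)
        + (∫ x, ∑ a, πe a x * fh a x * q x ∂μ)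
        - ∫ x, ∑ a, πe a x * f a x * q x ∂μ| ≤ II := by rw [hkey]; exact habs
  _ ≤ Real.sqrt IA * Real.sqrt IB := hfin
end

section
/- Cramér–Rao bound component for the reward model: under a regular parametric submodel p(y|a,x;θ₁) with score s(y,a,x) = ∇_{θ₁} log p(y|a,x;θ₁) satisfying E[s|A,X]=0, the quantity A₁ B₁^{−1} A₁ᵀ, where A₁ = E[r(X)w(A,X)·Y·sᵀ] and B₁ = E[s sᵀ], satisfies A₁ B₁^{−1} A₁ᵀ ≤ E[r²(X)w²(A,X)·Var[Y|A,X]]. -/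
open MeasureTheory Matrix

theorem l2_mul_integrable {Ω : Type*} [MeasurableSpace Ω] {P : Measure Ω} {f g : Ω → ℝ}
    (hf : MemLp f 2 P) (hg : MemLp g 2 P) : Integrable (fun ω => f ω * g ω) P := by
  have h : MemLp (f • g) 1 P := hg.smul hf
  exact memLp_one_iff_integrable.mp h

theorem condexp_memℒp_two {Ω : Type*} [mΩ : MeasurableSpace Ω] {P : Measure Ω}
    [IsProbabilityMeasure P]
    {m : MeasurableSpace Ω} (hle : m ≤ mΩ) {Y : Ω → ℝ} (hY : MemLp Y 2 P) :
    MemLp (P[Y|m]) 2 P := by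
  haveI : SigmaFinite (P.trim hle) := inferInstance
  set fL2 : Lp ℝ 2 P := hY.toLp Y with hfL2
  have heq : (condExpL2 ℝ ℝ hle fL2 : Ω → ℝ) =ᵐ[P] P[Y|m] := by
    refine ae_eq_condExp_of_forall_setIntegral_eq hle (hY.integrable one_le_two) ?_ ?_ ?_
    · intro s hms hμs
      exact integrableOn_condExpL2_of_measure_ne_top hle hμs.ne fL2
    · intro s hms hμs
      rw [integral_condExpL2_eq hle fL2 hms hμs.ne]
      exact integral_congr_ae (ae_restrict_of_ae (hY.coeFn_toLp))
    · exact aestronglyMeasurable_condExpL2 hle fL2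
  exact (Lp.memLp _).ae_eq heq

theorem cs_aux {Ω : Type*} {m : MeasurableSpace Ω} [mΩ : MeasurableSpace Ω]
    (hle : m ≤ mΩ) (P : Measure Ω) [IsProbabilityMeasure P] {d : ℕ}
    (g Y : Ω → ℝ) (hgsm : StronglyMeasurable[m] g)
    (Crw : ℝ) (hgbdd : ∀ ω, ‖g ω‖ ≤ Crw)
    (hY : MemLp Y 2 P)
    (s : Ω → Fin d → ℝ)
    (hs : ∀ i, MemLp (fun ω => s ω i) 2 P)
    (hscond : ∀ i, P[(fun ω => s ω i)|m] =ᵐ[P] (fun _ => (0 : ℝ)))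
    (B₁ : Matrix (Fin d) (Fin d) ℝ) (hB₁ : ∀ i j, B₁ i j = ∫ ω, s ω i * s ω j ∂P)
    (hB₁inv : IsUnit B₁.det)
    (A₁ : Fin d → ℝ)
    (hA₁ : ∀ i, A₁ i = ∫ ω, g ω * Y ω * s ω i ∂P) :
    A₁ ⬝ᵥ B₁⁻¹.mulVec A₁
      ≤ ∫ ω, (g ω)^2 * (P[(fun ω' => (Y ω' - (P[Y|m]) ω')^2)|m]) ω ∂P := by
  haveI : SigmaFinite (P.trim hle) := inferInstance
  set Yb : Ω → ℝ := P[Y|m] with hYbdef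
  set U : Ω → ℝ := fun ω => g ω * (Y ω - Yb ω) with hUdef
  have hgsm0 : StronglyMeasurable[mΩ] g := hgsm.mono hle
  have hgtop : MemLp g ⊤ P :=
    memLp_top_of_bound hgsm0.aestronglyMeasurable Crw (Filter.Eventually.of_forall hgbdd)
  have hYb2 : MemLp Yb 2 P := condexp_memℒp_two hle hY
  have hD2 : MemLp (fun ω => Y ω - Yb ω) 2 P := hY.sub hYb2
  have hU2 : MemLp U 2 P := hD2.smul hgtop
  have hgYb2 : MemLp (fun ω => g ω * Yb ω) 2 P := hYb2.smul hgtop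
  -- ∫ g · Yb · sᵢ = 0
  have hkey : ∀ i, ∫ ω, (g ω * Yb ω) * s ω i ∂P = 0 := by
    intro i
    set h : Ω → ℝ := fun ω => g ω * Yb ω with hhdef
    have hhsm : StronglyMeasurable[m] h := hgsm.mul stronglyMeasurable_condExp
    have hint : Integrable (h * fun ω => s ω i) P := l2_mul_integrable hgYb2 (hs i)
    have hpull := condExp_mul_of_stronglyMeasurable_left (μ := P) (m := m) hhsm hint
      ((hs i).integrable one_le_two)
    calc ∫ ω, h ω * s ω i ∂P = ∫ ω, (h * fun ω => s ω i) ω ∂P := rfl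
      _ = ∫ ω, (P[(h * fun ω => s ω i)|m]) ω ∂P := (integral_condExp hle).symm
      _ = ∫ ω, (h * P[(fun ω => s ω i)|m]) ω ∂P := integral_congr_ae hpull
      _ = 0 := by
          rw [integral_eq_zero_of_ae ?_]
          filter_upwards [hscond i] with ω hω
          simp [hω]
  -- A₁ i = ∫ U sᵢ
  have hUs_int : ∀ i, Integrable (fun ω => U ω * s ω i) P :=
    fun i => l2_mul_integrable hU2 (hs i)
  have hA₁' : ∀ i, A₁ i = ∫ ω, U ω * s ω i ∂P := by
    intro i
    have hsplit : ∀ ω, g ω * Y ω * s ω i = U ω * s ω i + (g ω * Yb ω) * s ω i := by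
      intro ω; simp only [hUdef]; ring
    rw [hA₁ i]
    calc ∫ ω, g ω * Y ω * s ω i ∂P
        = ∫ ω, (U ω * s ω i + (g ω * Yb ω) * s ω i) ∂P :=
          integral_congr_ae (Filter.Eventually.of_forall fun ω => hsplit ω)
      _ = (∫ ω, U ω * s ω i ∂P) + ∫ ω, (g ω * Yb ω) * s ω i ∂P :=
          integral_add (hUs_int i) (l2_mul_integrable hgYb2 (hs i))
      _ = ∫ ω, U ω * s ω i ∂P := by rw [hkey i, add_zero]
  -- RHS = ∫ U²
  have hRHS : ∫ ω, (g ω)^2 * (P[(fun ω' => (Y ω' - Yb ω')^2)|m]) ω ∂P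
      = ∫ ω, U ω ^ 2 ∂P := by
    set f2 : Ω → ℝ := fun ω => (Y ω - Yb ω)^2 with hf2def
    have hf2int : Integrable f2 P := hD2.integrable_sq
    have hg2sm : StronglyMeasurable[m] (fun ω => g ω ^ 2) := by
      exact hgsm.pow 2
    have hg2f2int : Integrable ((fun ω => g ω ^ 2) * f2) P := by
      refine hf2int.bdd_mul ((hgsm0.aestronglyMeasurable).pow 2) (c := Crw ^ 2) (Filter.Eventually.of_forall fun ω => ?_)
      have h1 := hgbdd ω
      rw [Real.norm_eq_abs] at h1 ⊢
      rw [abs_pow]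
      exact pow_le_pow_left₀ (abs_nonneg _) h1 2
    have hpull2 := condExp_mul_of_stronglyMeasurable_left (μ := P) (m := m) hg2sm hg2f2int hf2int
    calc ∫ ω, (g ω)^2 * (P[(fun ω' => (Y ω' - Yb ω')^2)|m]) ω ∂P
        = ∫ ω, ((fun ω => g ω ^ 2) * P[f2|m]) ω ∂P := rfl
      _ = ∫ ω, (P[((fun ω => g ω ^ 2) * f2)|m]) ω ∂P := (integral_congr_ae hpull2).symm
      _ = ∫ ω, ((fun ω => g ω ^ 2) * f2) ω ∂P := integral_condExp hle
      _ = ∫ ω, U ω ^ 2 ∂P := by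
          refine integral_congr_ae (Filter.Eventually.of_forall fun ω => ?_)
          simp only [Pi.mul_apply, hUdef, hf2def]
          ring
  -- Cauchy–Schwarz
  set c : Fin d → ℝ := B₁⁻¹.mulVec A₁ with hcdef
  have hBc : B₁.mulVec c = A₁ := by
    rw [hcdef, Matrix.mulVec_mulVec, Matrix.mul_nonsing_inv _ hB₁inv, Matrix.one_mulVec]
  set V : Ω → ℝ := fun ω => ∑ i, c i * s ω i with hVdef
  have hV2 : MemLp V 2 P :=
    memLp_finsetSum Finset.univ (fun i _ => ((hs i).const_mul (c i)))
  have hUV_int : Integrable (fun ω => U ω * V ω) P := l2_mul_integrable hU2 hV2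
  have hUVval : ∫ ω, U ω * V ω ∂P = c ⬝ᵥ A₁ := by
    have hptw : ∀ ω, U ω * V ω = ∑ i, c i * (U ω * s ω i) := by
      intro ω
      simp only [hVdef, Finset.mul_sum]
      exact Finset.sum_congr rfl fun i _ => by ring
    rw [integral_congr_ae (Filter.Eventually.of_forall hptw),
      integral_finset_sum _ (fun i _ => (hUs_int i).const_mul (c i))]
    simp only [integral_const_mul, dotProduct]
    exact Finset.sum_congr rfl fun i _ => by rw [hA₁' i]
  have hss_int : ∀ i j, Integrable (fun ω => s ω i * s ω j) P :=
    fun i j => l2_mul_integrable (hs i) (hs j)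
  have hVVval : ∫ ω, V ω ^ 2 ∂P = c ⬝ᵥ A₁ := by
    have hptw : ∀ ω, V ω ^ 2 = ∑ i, ∑ j, c i * c j * (s ω i * s ω j) := by
      intro ω
      simp only [hVdef, sq, Finset.sum_mul_sum]
      exact Finset.sum_congr rfl fun i _ => Finset.sum_congr rfl fun j _ => by ring
    rw [integral_congr_ae (Filter.Eventually.of_forall hptw),
      integral_finset_sum _ (fun i _ => integrable_finset_sum _
        (fun j _ => ((hss_int i j).const_mul (c i * c j))))]
    have hinner : ∀ i, ∫ ω, ∑ j, c i * c j * (s ω i * s ω j) ∂P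
        = ∑ j, c i * c j * B₁ i j := by
      intro i
      rw [integral_finset_sum _ (fun j _ => ((hss_int i j).const_mul (c i * c j)))]
      exact Finset.sum_congr rfl fun j _ => by rw [integral_const_mul, hB₁ i j]
    rw [Finset.sum_congr rfl fun i _ => hinner i, ← hBc]
    simp only [dotProduct, Matrix.mulVec, Finset.mul_sum]
    exact Finset.sum_congr rfl fun i _ =>
      Finset.sum_congr rfl fun j _ => by ring
  have hpos : 0 ≤ ∫ ω, (U ω - V ω)^2 ∂P := integral_nonneg fun ω => sq_nonneg _
  have hexpand : ∫ ω, (U ω - V ω)^2 ∂P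
      = (∫ ω, U ω ^ 2 ∂P) - 2 * (c ⬝ᵥ A₁) + (c ⬝ᵥ A₁) := by
    have hptw : ∀ ω, (U ω - V ω)^2 = U ω ^ 2 - 2 * (U ω * V ω) + V ω ^ 2 :=
      fun ω => by ring
    have hsq : Integrable (fun ω => U ω ^ 2) P := hU2.integrable_sq
    have h2uv : Integrable (fun ω => 2 * (U ω * V ω)) P := hUV_int.const_mul 2
    have hsub : Integrable (fun ω => U ω ^ 2 - 2 * (U ω * V ω)) P := hsq.sub h2uv
    rw [integral_congr_ae (Filter.Eventually.of_forall hptw),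
      integral_add hsub hV2.integrable_sq, integral_sub hsq h2uv,
      integral_const_mul, hUVval, hVVval]
  rw [dotProduct_comm, hRHS]
  linarith

/-- Cramér–Rao bound component for the reward model: for a score
`s` with `E[s | A, X] = 0` and `B₁ = E[s sᵀ]` invertible, the quantity
`A₁ B₁⁻¹ A₁ᵀ` with `A₁ = E[r(X) w(A,X) Y sᵀ]` satisfies
`A₁ B₁⁻¹ A₁ᵀ ≤ E[r²(X) w²(A,X) Var[Y | A, X]]`. -/
theorem cr_bound_reward_model {Ω : Type*} [mΩ : MeasurableSpace Ω]
    {𝒳 : Type*} [MeasurableSpace 𝒳] {A : Type*} [MeasurableSpace A]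
    (P : Measure Ω) [IsProbabilityMeasure P] {d : ℕ}
    (Xv : Ω → 𝒳) (Av : Ω → A) (Y : Ω → ℝ)
    (hXv : Measurable Xv) (hAv : Measurable Av)
    (hY : MemLp Y 2 P)
    (r : 𝒳 → ℝ) (w : A → 𝒳 → ℝ)
    (hrm : Measurable r) (hwm : Measurable (Function.uncurry w))
    (Crw : ℝ) (hrw : ∀ a x, |r x * w a x| ≤ Crw)
    (mAX : MeasurableSpace Ω)
    (hmAX : mAX = MeasurableSpace.comap (fun ω => (Av ω, Xv ω)) inferInstance)
    (hle : mAX ≤ mΩ)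
    (s : Ω → Fin d → ℝ)
    (hs : ∀ i, MemLp (fun ω => s ω i) 2 P)
    (hscond : ∀ i, P[(fun ω => s ω i)|mAX] =ᵐ[P] (fun _ => (0 : ℝ)))
    (B₁ : Matrix (Fin d) (Fin d) ℝ) (hB₁ : ∀ i j, B₁ i j = ∫ ω, s ω i * s ω j ∂P)
    (hB₁inv : IsUnit B₁.det)
    (A₁ : Fin d → ℝ)
    (hA₁ : ∀ i, A₁ i = ∫ ω, r (Xv ω) * w (Av ω) (Xv ω) * Y ω * s ω i ∂P) :
    A₁ ⬝ᵥ B₁⁻¹.mulVec A₁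
      ≤ ∫ ω, (r (Xv ω) * w (Av ω) (Xv ω))^2
          * (P[(fun ω' => (Y ω' - (P[Y|mAX]) ω')^2)|mAX]) ω ∂P := by
  have hφ : Measurable[mAX] (fun ω => (Av ω, Xv ω)) :=
    measurable_iff_comap_le.mpr (le_of_eq hmAX.symm)
  have hpm : Measurable (fun p : A × 𝒳 => r p.2 * w p.1 p.2) :=
    (hrm.comp measurable_snd).mul hwm
  have hgsm : StronglyMeasurable[mAX] (fun ω => r (Xv ω) * w (Av ω) (Xv ω)) :=
    (hpm.comp hφ).stronglyMeasurable
  exact cs_aux (mΩ := mΩ) hle P (fun ω => r (Xv ω) * w (Av ω) (Xv ω)) Y hgsm Crw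
    (fun ω => by simpa only [Real.norm_eq_abs] using hrw (Av ω) (Xv ω))
    hY s hs hscond B₁ hB₁ hB₁inv A₁ hA₁
end
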